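/- arXiv:2310.05298 — 4 statements merged into one kernel-verified Lean document; each statement's English description precedes it below -/
import Mathlib

section
/- Let f : ℝ → ℝ be sqrt-bounded, i.e., there exist constants M₀ ≥ 1 and M* ≥ 1 such that f(m) ≥ 1 for all m ≥ 1, f(m) ≤ √m for all m ≥ M₀, and f(m) ≤ M* for all m ∈ [1, M₀]. Let c > 0 and let T : ℝ → ℝ be a nonnegative function that is bounded on [0, 8) and satisfies T(m) ≤ c · (log m / log 2) · f(m) + (f(m) + 1) · T(m / (f(m) + 1)) for all m ≥ 8. Then there exists a constant C > 0 such that T(m) ≤ C · m for all m ≥ 1. -/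
set_option maxHeartbeats 1000000 in
/-- GSAT construction-time recurrence: if `f` is sqrt-bounded and `T` satisfies
`T m ≤ c · log₂ m · f m + (f m + 1) · T (m / (f m + 1))` for `m ≥ 8`,
then `T m = O(m)`. -/
theorem gsat_recurrence_linear
    (f : ℝ → ℝ) (M₀ Mstar : ℝ) (hM₀ : 1 ≤ M₀) (hMstar : 1 ≤ Mstar)
    (hf_ge_one : ∀ m : ℝ, 1 ≤ m → 1 ≤ f m)
    (hf_sqrt : ∀ m : ℝ, M₀ ≤ m → f m ≤ Real.sqrt m)
    (hf_init : ∀ m ∈ Set.Icc (1 : ℝ) M₀, f m ≤ Mstar)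
    (c : ℝ) (hc : 0 < c)
    (T : ℝ → ℝ) (hT_nonneg : ∀ m, 0 ≤ T m)
    (hT_bdd : ∃ K : ℝ, ∀ m ∈ Set.Ico (0 : ℝ) 8, T m ≤ K)
    (hrec : ∀ m : ℝ, 8 ≤ m →
      T m ≤ c * (Real.log m / Real.log 2) * f m + (f m + 1) * T (m / (f m + 1))) :
    ∃ C : ℝ, 0 < C ∧ ∀ m : ℝ, 1 ≤ m → T m ≤ C * m := by
  obtain ⟨K0, hK0⟩ := hT_bdd
  set K : ℝ := max K0 1 with hKdef
  have hK1 : (1:ℝ) ≤ K := le_max_right _ _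
  have hTK : ∀ m ∈ Set.Ico (0:ℝ) 8, T m ≤ K := fun m hm => (hK0 m hm).trans (le_max_left _ _)
  have hL2 : 0 < Real.log 2 := Real.log_pos (by norm_num)
  set S : ℝ := Mstar with hSdef
  have hS1 : 1 ≤ S := hMstar
  have hS0 : 0 < S := by linarith
  -- f m ≤ S * sqrt m for all m ≥ 1
  have hfS : ∀ m : ℝ, 1 ≤ m → f m ≤ S * Real.sqrt m := by
    intro m hm
    have hsq : 1 ≤ Real.sqrt m := by
      rw [show (1:ℝ) = Real.sqrt 1 by simp]
      exact Real.sqrt_le_sqrt hm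
    rcases le_or_gt m M₀ with h | h
    · have := hf_init m ⟨hm, h⟩
      nlinarith
    · have := hf_sqrt m h.le
      nlinarith
  set A : ℝ := 24 * c * S / Real.log 2 with hAdef
  have hA0 : 0 < A := by positivity
  set B : ℝ := 8 * c * S^4 / Real.log 2 + 4 * S^2 * K with hBdef
  have hB0 : 0 < B := by positivity
  set C : ℝ := A + K + B with hCdef
  have hC0 : 0 < C := by positivity
  have key : ∀ n : ℕ, ∀ m : ℝ, 1 ≤ m → m ≤ n → T m ≤ C * m - A * m ^ (3/4 : ℝ) := by
    intro n
    induction n using Nat.strong_induction_on with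
    | _ n ih =>
      intro m hm1 hmn
      have hm0 : (0:ℝ) < m := by linarith
      have h34m : m ^ (3/4:ℝ) ≤ m := by
        have := Real.rpow_le_rpow_of_exponent_le hm1 (show (3/4:ℝ) ≤ 1 by norm_num)
        rwa [Real.rpow_one] at this
      have h34pos : (0:ℝ) < m ^ (3/4:ℝ) := by positivity
      rcases lt_or_ge m 8 with hm8 | hm8
      · -- base case
        have hT : T m ≤ K := hTK m ⟨by linarith, hm8⟩
        nlinarith [mul_le_mul_of_nonneg_left h34m hA0.le,
          mul_le_mul_of_nonneg_left hm1 hB0.le,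
          mul_le_mul_of_nonneg_left hm1 (by linarith : (0:ℝ) ≤ K)]
      · -- recursive case
        have hf1 : 1 ≤ f m := hf_ge_one m hm1
        set g : ℝ := f m + 1 with hgdef
        have hg2 : 2 ≤ g := by rw [hgdef]; linarith
        have hg0 : 0 < g := by linarith
        set m' : ℝ := m / g with hm'def
        have hm'0 : 0 < m' := by positivity
        have hm'half : m' ≤ m / 2 := by
          apply div_le_div_of_nonneg_left hm0.le (by norm_num) hg2
        have hsq1 : 1 ≤ Real.sqrt m := by
          rw [show (1:ℝ) = Real.sqrt 1 by simp]
          exact Real.sqrt_le_sqrt hm1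
        have hsqsq : Real.sqrt m * Real.sqrt m = m := Real.mul_self_sqrt hm0.le
        have hfSm : f m ≤ S * Real.sqrt m := hfS m hm1
        have hgS : g ≤ 2 * S * Real.sqrt m := by
          have : (1:ℝ) ≤ S * Real.sqrt m := by nlinarith
          rw [hgdef]; linarith
        have hlogm0 : 0 ≤ Real.log m := Real.log_nonneg hm1
        have hrecm := hrec m hm8
        rcases lt_or_ge m' 1 with hm'1 | hm'1
        · -- m' < 1 : m is bounded, use K bound
          have hTm' : T m' ≤ K := hTK m' ⟨hm'0.le, by linarith⟩
          have hmlt : m < g := by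
            by_contra h
            push_neg at h
            have : 1 ≤ m' := (one_le_div hg0).mpr h
            linarith
          have hsp : 0 < Real.sqrt m := by linarith
          have hsqlt : Real.sqrt m < 2 * S := by
            have h' : Real.sqrt m * Real.sqrt m < (2 * S) * Real.sqrt m := by
              rw [hsqsq]; linarith
            exact lt_of_mul_lt_mul_right h' hsp.le
          have hmlt4 : m < 4 * S^2 := by
            have h' := mul_lt_mul'' hsqlt hsqlt hsp.le hsp.le
            rw [hsqsq] at h'; nlinarith
          have hlogm : Real.log m ≤ m - 1 := Real.log_le_sub_one_of_pos hm0
          have h1 : c * (Real.log m / Real.log 2) * f m ≤ 8 * c * S^4 / Real.log 2 := by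
            have hlt1 : Real.log m ≤ 4 * S^2 := by linarith
            have hlt2 : f m ≤ 2 * S^2 := by nlinarith
            have hnum : c * Real.log m * f m ≤ 8 * c * S^4 := by
              have hmm := mul_le_mul hlt1 hlt2 (by linarith) (by positivity)
              nlinarith
            calc c * (Real.log m / Real.log 2) * f m
                = (c * Real.log m * f m) / Real.log 2 := by ring
              _ ≤ (8 * c * S^4) / Real.log 2 := by
                  gcongr
          have h2 : g * T m' ≤ 4 * S^2 * K := by
            have hg4 : g ≤ 4 * S^2 := by nlinarith
            have := hT_nonneg m'
            nlinarith
          have hB : c * (Real.log m / Real.log 2) * f m + g * T m' ≤ B := by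
            rw [hBdef]; exact add_le_add h1 h2
          have hTm : T m ≤ B := le_trans hrecm hB
          nlinarith [mul_le_mul_of_nonneg_left h34m hA0.le,
            mul_le_mul_of_nonneg_left hm1 hB0.le,
            mul_le_mul_of_nonneg_left hm1 (by linarith : (0:ℝ) ≤ K)]
        · -- m' ≥ 1 : apply induction hypothesis
          have hn8 : (8:ℝ) ≤ (n:ℝ) := le_trans hm8 hmn
          have hn1 : 1 ≤ n := by exact_mod_cast le_trans (by norm_num : (1:ℝ) ≤ 8) hn8
          have hn2 : (2:ℝ) ≤ (n:ℝ) := by linarith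
          have hm'n : m' ≤ ((n-1 : ℕ) : ℝ) := by
            have : ((n-1:ℕ):ℝ) = (n:ℝ) - 1 := by
              push_cast [Nat.cast_sub hn1]; ring
            rw [this]
            have : m / 2 ≤ (n:ℝ) / 2 := by linarith
            linarith
          have hT' : T m' ≤ C * m' - A * m' ^ (3/4:ℝ) :=
            ih (n-1) (Nat.sub_lt hn1 one_pos) m' hm'1 hm'n
          have step1 : T m ≤ c * (Real.log m / Real.log 2) * f m
              + g * (C * m' - A * m' ^ (3/4:ℝ)) := by
            refine le_trans hrecm ?_
            have := mul_le_mul_of_nonneg_left hT' hg0.le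
            linarith
          have hgm : g * m' = m := by
            rw [hm'def]; field_simp
          have hq : g ^ (1/4:ℝ) = g / g ^ (3/4:ℝ) := by
            rw [show (1/4:ℝ) = 1 - 3/4 by norm_num, Real.rpow_sub hg0, Real.rpow_one]
          have hpow : g * m' ^ (3/4:ℝ) = g ^ (1/4:ℝ) * m ^ (3/4:ℝ) := by
            rw [hm'def, Real.div_rpow hm0.le hg0.le, hq]
            have hg34 : g ^ (3/4:ℝ) ≠ 0 := by positivity
            field_simp
          have hg14 : (7/6:ℝ) ≤ g ^ (1/4:ℝ) := by
            have h2g : (2:ℝ)^(1/4:ℝ) ≤ g^(1/4:ℝ) :=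
              Real.rpow_le_rpow (by norm_num) hg2 (by norm_num)
            have h76 : (7/6:ℝ) ≤ (2:ℝ)^(1/4:ℝ) := by
              have he : (((7/6:ℝ))^((4:ℕ):ℝ))^((1/4):ℝ) = 7/6 := by
                rw [← Real.rpow_mul (by norm_num : (0:ℝ) ≤ 7/6)]
                rw [show ((4:ℕ):ℝ) * (1/4) = 1 by push_cast; norm_num, Real.rpow_one]
              have hle : ((7/6:ℝ))^((4:ℕ):ℝ) ≤ 2 := by
                rw [Real.rpow_natCast]; norm_num
              calc (7/6:ℝ) = (((7/6:ℝ))^((4:ℕ):ℝ))^((1/4):ℝ) := he.symm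
                _ ≤ (2:ℝ)^(1/4:ℝ) := Real.rpow_le_rpow (by positivity) hle (by norm_num)
            linarith
          have hlog4 : Real.log m ≤ 4 * m ^ (1/4:ℝ) := by
            have h := Real.log_le_sub_one_of_pos (show (0:ℝ) < m ^ (1/4:ℝ) by positivity)
            rw [Real.log_rpow hm0] at h
            have : (0:ℝ) ≤ m ^ (1/4:ℝ) := by positivity
            linarith
          have hsqrt_eq : Real.sqrt m = m ^ (1/2:ℝ) := Real.sqrt_eq_rpow m
          have hmul : m ^ (1/2:ℝ) * m ^ (1/4:ℝ) = m ^ (3/4:ℝ) := by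
            rw [← Real.rpow_add hm0]; norm_num
          have hterm : c * (Real.log m / Real.log 2) * f m ≤ (A/6) * m ^ (3/4:ℝ) := by
            have hnum : c * Real.log m * f m ≤ 4 * c * S * m ^ (3/4:ℝ) := by
              have hfb : f m ≤ S * m ^ (1/2:ℝ) := by rw [← hsqrt_eq]; exact hfSm
              have h12 : (0:ℝ) ≤ m ^ (1/2:ℝ) := by positivity
              have h14 : (0:ℝ) ≤ m ^ (1/4:ℝ) := by positivity
              have hmm := mul_le_mul hlog4 hfb (by linarith) (by positivity)
              have heq : 4 * m ^ (1/4:ℝ) * (S * m ^ (1/2:ℝ)) = 4 * S * m ^ (3/4:ℝ) := by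
                rw [← hmul]; ring
              calc c * Real.log m * f m = c * (Real.log m * f m) := by ring
                _ ≤ c * (4 * m ^ (1/4:ℝ) * (S * m ^ (1/2:ℝ))) :=
                    mul_le_mul_of_nonneg_left hmm hc.le
                _ = c * (4 * S * m ^ (3/4:ℝ)) := by rw [heq]
                _ = 4 * c * S * m ^ (3/4:ℝ) := by ring
            have : (A/6) = (4 * c * S) / Real.log 2 := by rw [hAdef]; ring
            rw [this]
            calc c * (Real.log m / Real.log 2) * f m
                = (c * Real.log m * f m) / Real.log 2 := by ring
              _ ≤ (4 * c * S * m ^ (3/4:ℝ)) / Real.log 2 := by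
                  gcongr
              _ = ((4 * c * S) / Real.log 2) * m ^ (3/4:ℝ) := by ring
          have hg14m : A * m ^ (3/4:ℝ) + (A/6) * m ^ (3/4:ℝ) ≤ A * (g ^ (1/4:ℝ) * m ^ (3/4:ℝ)) := by
            have := mul_le_mul_of_nonneg_left
              (mul_le_mul_of_nonneg_right hg14 h34pos.le) hA0.le
            linarith
          calc T m ≤ c * (Real.log m / Real.log 2) * f m + g * (C * m' - A * m' ^ (3/4:ℝ)) := step1
            _ = c * (Real.log m / Real.log 2) * f m + C * (g * m') - A * (g * m' ^ (3/4:ℝ)) := by ring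
            _ = c * (Real.log m / Real.log 2) * f m + C * m - A * (g ^ (1/4:ℝ) * m ^ (3/4:ℝ)) := by
                rw [hgm, hpow]
            _ ≤ C * m - A * m ^ (3/4:ℝ) := by linarith
  refine ⟨C, hC0, fun m hm => ?_⟩
  obtain ⟨n, hn⟩ := exists_nat_ge m
  have h := key n m hm hn
  have h34 : 0 ≤ A * m ^ (3/4:ℝ) := by positivity
  exact h.trans (sub_le_self _ h34)
end

section
/- For every natural number r ≥ 2, the real sum ∑_{i=1}^{r−1} 2^i / i is at most 3 · 2^(r−1) / (r−1). -/
lemma sum_two_pow_div_le_aux (n : ℕ) (hn : 1 ≤ n) :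
    ∑ i ∈ Finset.Icc 1 n, (2 : ℝ) ^ i / (i : ℝ) ≤ 3 * (2 : ℝ) ^ n / (n : ℝ) := by
  rcases Nat.lt_or_ge n 3 with h | h
  · interval_cases n
    · norm_num
    · rw [show Finset.Icc 1 2 = {1, 2} by decide]
      norm_num
  · induction n, h using Nat.le_induction with
    | base =>
      rw [show (3:ℕ) = 2 + 1 from rfl, Finset.sum_Icc_succ_top (by omega),
        show Finset.Icc 1 2 = {1, 2} by decide]
      norm_num
    | succ n hn3 ih =>
      rw [Finset.sum_Icc_succ_top (by omega)]
      have hn0 : (0:ℝ) < n := by positivity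
      have hn1 : (0:ℝ) < (n:ℝ) + 1 := by positivity
      have hnc : (3:ℝ) ≤ n := by exact_mod_cast hn3
      have hp : (0:ℝ) < 2 ^ n := by positivity
      have ih' := ih (by omega)
      have key : 3 * (2:ℝ) ^ n / n + 2 ^ (n + 1) / ((n:ℝ) + 1) ≤
          3 * (2:ℝ) ^ (n + 1) / ((n:ℝ) + 1) := by
        rw [div_add_div _ _ (ne_of_gt hn0) (ne_of_gt hn1), div_le_div_iff₀ (by positivity) hn1,
          pow_succ]
        nlinarith [mul_pos hn0 hp]
      push_cast
      linarith [ih', key]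

/-- For `r ≥ 2`, `∑_{i=1}^{r-1} 2^i / i ≤ 3 · 2^(r-1) / (r-1)`. -/
theorem sum_two_pow_div_le (r : ℕ) (hr : 2 ≤ r) :
    ∑ i ∈ Finset.Icc 1 (r - 1), (2 : ℝ) ^ i / (i : ℝ) ≤
      3 * (2 : ℝ) ^ (r - 1) / ((r : ℝ) - 1) := by
  have h := sum_two_pow_div_le_aux (r - 1) (by omega)
  have : ((r - 1 : ℕ) : ℝ) = (r : ℝ) - 1 := by
    have : (1:ℕ) ≤ r := by omega
    push_cast [this]; ring
  rwa [this] at h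
end

section
/- Let d : ℝ → ℝ be a nonnegative nondecreasing function and d₀ ≥ 0 a constant such that d(m) ≤ d₀ for all m ∈ [1, 16] and d(m) ≤ 1 + d(m / (log m / log 2)) for all m > 16. Then there exists a constant C > 0 such that d(m) ≤ C · log m / log (log m) for all m ≥ 16. -/
private lemma salt_exp_aux : (25:ℝ) ≤ Real.exp 8 := by
  have h4 : (5:ℝ) ≤ Real.exp 4 := by
    have := Real.add_one_le_exp (4:ℝ); linarith
  have h8 : Real.exp 8 = Real.exp 4 * Real.exp 4 := by
    rw [← Real.exp_add]; norm_num
  nlinarith [Real.exp_pos (4:ℝ)]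

private lemma salt_log_helper {t : ℝ} (ht : 16 ≤ t) : Real.log t + 1 ≤ t / 2 := by
  have hs : (4:ℝ) ≤ Real.sqrt t := by
    have : Real.sqrt 16 ≤ Real.sqrt t := Real.sqrt_le_sqrt ht
    rwa [show (16:ℝ) = 4^2 by norm_num, Real.sqrt_sq (by norm_num : (0:ℝ) ≤ 4)] at this
  have h1 : Real.log (Real.sqrt t) ≤ Real.sqrt t - 1 :=
    Real.log_le_sub_one_of_pos (by linarith)
  have h2 : Real.log t = 2 * Real.log (Real.sqrt t) := by
    rw [Real.log_sqrt (by linarith)]; ring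
  have h3 : Real.sqrt t * Real.sqrt t = t := Real.mul_self_sqrt (by linarith)
  nlinarith

private lemma salt_log_one_sub {x : ℝ} (hx0 : 0 ≤ x) (hx : x ≤ 1/2) :
    -(2*x) ≤ Real.log (1 - x) := by
  have h1 : 2*x + 1 ≤ Real.exp (2*x) := by have := Real.add_one_le_exp (2*x); linarith
  have hpos := Real.exp_pos (2*x)
  have h5 : Real.exp (-(2*x)) ≤ 1 - x := by
    rw [Real.exp_neg]
    have hinv : (0:ℝ) < (Real.exp (2*x))⁻¹ := by positivity
    have hEE : (Real.exp (2*x))⁻¹ * Real.exp (2*x) = 1 := inv_mul_cancel₀ (ne_of_gt hpos)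
    nlinarith [mul_le_mul_of_nonneg_left h1 (le_of_lt hinv)]
  calc -(2*x) = Real.log (Real.exp (-(2*x))) := (Real.log_exp _).symm
    _ ≤ Real.log (1 - x) := Real.log_le_log (Real.exp_pos _) h5

private lemma salt_arith {t L ε : ℝ} (hL8 : 8 ≤ L)
    (hεt : (2*t - L) * ε ≤ 4*(L+1)) : (t - L) * (2*L) ≤ (2*t - L) * (L - ε) := by
  nlinarith [sq_nonneg (L - 8)]

/-- Key step: for `m ≥ exp (exp 8)`, with `m' = m / log₂ m`, we have
`16 ≤ m'`, `m' ≤ m/2`, and `f m' + 1/2 ≤ f m` where `f x = log x / log log x`. -/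
private lemma salt_key (m : ℝ) (hm : Real.exp (Real.exp 8) ≤ m) :
    16 ≤ m / (Real.log m / Real.log 2) ∧
    m / (Real.log m / Real.log 2) ≤ m / 2 ∧
    Real.log (m / (Real.log m / Real.log 2)) /
        Real.log (Real.log (m / (Real.log m / Real.log 2))) + 1/2
      ≤ Real.log m / Real.log (Real.log m) := by
  have hexp8 : (25:ℝ) ≤ Real.exp 8 := salt_exp_aux
  have hm0 : (0:ℝ) < m := lt_of_lt_of_le (Real.exp_pos _) hm
  set t := Real.log m with ht_def
  have ht : Real.exp 8 ≤ t := by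
    have := Real.log_le_log (Real.exp_pos _) hm
    rwa [Real.log_exp] at this
  have ht25 : (25:ℝ) ≤ t := le_trans hexp8 ht
  have ht0 : (0:ℝ) < t := by linarith
  set L := Real.log t with hL_def
  have hL8 : (8:ℝ) ≤ L := by
    have := Real.log_le_log (Real.exp_pos _) ht
    rwa [Real.log_exp] at this
  have hL0 : (0:ℝ) < L := by linarith
  have hLt : L + 1 ≤ t / 2 := salt_log_helper (by linarith)
  -- log 2 facts
  have hlog2_pos : (0:ℝ) < Real.log 2 := Real.log_pos (by norm_num)
  have hlog2_lt1 : Real.log 2 ≤ 1 := by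
    have := Real.log_le_sub_one_of_pos (by norm_num : (0:ℝ) < 2); linarith
  have hll2_le0 : Real.log (Real.log 2) ≤ 0 := Real.log_nonpos (le_of_lt hlog2_pos) hlog2_lt1
  have hll2_ge : (-1:ℝ) ≤ Real.log (Real.log 2) := by
    rw [Real.le_log_iff_exp_le hlog2_pos]
    have he1 : (2:ℝ) ≤ Real.exp 1 := by have := Real.add_one_le_exp (1:ℝ); linarith
    have h1 : Real.exp (-1) * Real.exp 1 = 1 := by rw [← Real.exp_add]; norm_num
    have hexpneg : Real.exp (-1) ≤ 1/2 := by
      nlinarith [Real.exp_pos (-1:ℝ)]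
    have hl2 : (1:ℝ)/2 ≤ Real.log 2 := by
      rw [Real.le_log_iff_exp_le (by norm_num : (0:ℝ) < 2)]
      have hsq : Real.exp (1/2) * Real.exp (1/2) = Real.exp 1 := by
        rw [← Real.exp_add]; norm_num
      nlinarith [Real.exp_pos ((1:ℝ)/2), Real.exp_one_lt_d9]
    linarith
  -- m' and its log
  set m' := m / (Real.log m / Real.log 2) with hm'_def
  have hm'_eq : m' = m * Real.log 2 / t := by
    rw [hm'_def, div_div_eq_mul_div]
  have hm'0 : (0:ℝ) < m' := by
    rw [hm'_eq]; positivity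
  have hs_eq : Real.log m' = t - (L - Real.log (Real.log 2)) := by
    rw [hm'_eq, Real.log_div (by positivity) (ne_of_gt ht0),
      Real.log_mul (ne_of_gt hm0) (ne_of_gt hlog2_pos)]
    ring
  set a := L - Real.log (Real.log 2) with ha_def
  have ha_lb : L ≤ a := by rw [ha_def]; linarith
  have ha_ub : a ≤ L + 1 := by rw [ha_def]; linarith
  have ha0 : (0:ℝ) < a := by linarith
  set s := Real.log m' with hs_def
  have hs_val : s = t - a := hs_eq
  have hs_lb : t / 2 ≤ s := by rw [hs_val]; linarith
  have hs_ub : s ≤ t - L := by rw [hs_val]; linarith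
  -- claim (a): 16 ≤ m'
  have hlog16 : Real.log 16 ≤ 4 := by
    have : Real.log 16 = 4 * Real.log 2 := by
      rw [show (16:ℝ) = 2^4 by norm_num, Real.log_pow]; norm_num
    rw [this]; linarith
  have h16m' : (16:ℝ) ≤ m' := by
    have h1 : Real.log 16 ≤ Real.log m' := by
      rw [← hs_def] at *; linarith [hs_lb]
    have := (Real.log_le_log_iff (by norm_num : (0:ℝ) < 16) hm'0).mp h1
    exact this
  refine ⟨h16m', ?_, ?_⟩
  -- claim (b): m' ≤ m / 2
  · rw [hm'_eq]
    rw [div_le_div_iff₀ ht0 (by norm_num : (0:ℝ) < 2)]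
    nlinarith
  -- claim (c)
  · -- lower bound log s
    have hxs : a / t ≤ 1/2 := by
      rw [div_le_iff₀ ht0]; linarith
    have hx0 : 0 ≤ a / t := by positivity
    have h1x : (0:ℝ) < 1 - a/t := by linarith
    have hsplit : Real.log s = L + Real.log (1 - a/t) := by
      have : s = t * (1 - a/t) := by
        field_simp [hs_val]
        exact hs_val
      rw [this, Real.log_mul (ne_of_gt ht0) (ne_of_gt h1x)]
    have hlogs_lb : L - 2 * (L+1) / t ≤ Real.log s := by
      have h2 := salt_log_one_sub hx0 hxs
      have h3 : 2 * a / t ≤ 2 * (L+1) / t := by gcongr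
      rw [hsplit]
      have h4 : 2 * (a/t) = 2 * a / t := by ring
      linarith
    set ε := 2 * (L+1) / t with hε_def
    have hε0 : 0 ≤ ε := by positivity
    have hε1 : ε ≤ 1 := by
      rw [hε_def, div_le_one ht0]; linarith
    have hB0 : (0:ℝ) < L - ε := by linarith
    have htL : L ≤ t := by linarith
    have hstep1 : s / Real.log s ≤ (t - L) / (L - ε) :=
      div_le_div₀ (by linarith) hs_ub hB0 hlogs_lb
    have hmul : 2 * t * ε = 4 * (L + 1) := by
      rw [hε_def]; field_simp; ring
    have hεt : (2*t - L) * ε ≤ 4 * (L+1) := by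
      nlinarith
    have hstep2 : (t - L) / (L - ε) ≤ (2*t - L) / (2*L) := by
      rw [div_le_div_iff₀ hB0 (by linarith : (0:ℝ) < 2*L)]
      exact salt_arith hL8 hεt
    have hstep3 : (2*t - L) / (2*L) = t / L - 1/2 := by
      field_simp
    have := hstep1.trans hstep2
    rw [hstep3] at this
    linarith

private lemma salt_f_ge_one {m : ℝ} (hm : 16 ≤ m) :
    1 ≤ Real.log m / Real.log (Real.log m) ∧ 0 < Real.log (Real.log m) := by
  have ht1 : (1:ℝ) < Real.log m := by
    rw [Real.lt_log_iff_exp_lt (by linarith : (0:ℝ) < m)]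
    calc Real.exp 1 < 2.7182818286 := Real.exp_one_lt_d9
      _ ≤ 16 := by norm_num
      _ ≤ m := hm
  have hL0 : 0 < Real.log (Real.log m) := Real.log_pos ht1
  refine ⟨?_, hL0⟩
  rw [le_div_iff₀ hL0, one_mul]
  have := Real.log_le_sub_one_of_pos (by linarith : (0:ℝ) < Real.log m)
  linarith

/-- SALT depth recurrence: if `d m ≤ 1 + d (m / log₂ m)` for `m > 16`, then
`d m = O(log m / log log m)`. -/
theorem salt_depth (d : ℝ → ℝ) (hd_nonneg : ∀ m, 0 ≤ d m) (hd_mono : Monotone d)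
    (d₀ : ℝ) (hd₀ : 0 ≤ d₀)
    (h_init : ∀ m ∈ Set.Icc (1 : ℝ) 16, d m ≤ d₀)
    (h_rec : ∀ m : ℝ, 16 < m → d m ≤ 1 + d (m / (Real.log m / Real.log 2))) :
    ∃ C : ℝ, 0 < C ∧ ∀ m : ℝ, 16 ≤ m →
      d m ≤ C * Real.log m / Real.log (Real.log m) := by
  set M := Real.exp (Real.exp 8) with hM_def
  have hM16 : (16:ℝ) ≤ M := by
    have h25 : (25:ℝ) ≤ Real.exp 8 := salt_exp_aux
    have h1 : Real.exp 25 ≤ M := Real.exp_le_exp.mpr h25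
    have h2 := Real.add_one_le_exp (25:ℝ)
    linarith
  set D := d M with hD_def
  have hD0 : 0 ≤ D := hd_nonneg M
  have main : ∀ n : ℕ, ∀ m : ℝ, 16 ≤ m → m ≤ M * 2^n →
      d m ≤ D + 2 * (Real.log m / Real.log (Real.log m)) := by
    intro n
    induction n with
    | zero =>
      intro m h16 hle
      rw [pow_zero, mul_one] at hle
      have h1 : d m ≤ D := hd_mono hle
      have h2 := (salt_f_ge_one h16).1
      linarith
    | succ n ih =>
      intro m h16 hle
      by_cases hMm : m ≤ M
      · have h1 : d m ≤ D := hd_mono hMm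
        have h2 := (salt_f_ge_one h16).1
        linarith
      · push_neg at hMm
        obtain ⟨h16', hhalf, hgap⟩ := salt_key m hMm.le
        have hrec := h_rec m (lt_of_le_of_lt hM16 hMm)
        have hle' : m / (Real.log m / Real.log 2) ≤ M * 2^n := by
          have : m ≤ M * 2^n * 2 := by
            rw [pow_succ] at hle; linarith
          linarith
        have ihm' := ih _ h16' hle'
        linarith
  refine ⟨D + 3, by linarith, ?_⟩
  intro m h16
  obtain ⟨n, hn⟩ := pow_unbounded_of_one_lt m (one_lt_two (α := ℝ))
  have hmle : m ≤ M * 2^n := by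
    have h1 : (2:ℝ)^n ≤ M * 2^n := by
      nlinarith [pow_pos (by norm_num : (0:ℝ) < 2) n]
    linarith
  have h1 := main n m h16 hmle
  have h2 := (salt_f_ge_one h16).1
  rw [mul_div_assoc]
  nlinarith
end

section
/- Let α < 1, c ≥ 0 and B ≥ 0 be real numbers, and let g : ℝ → ℝ be a nonnegative function such that g(m) ≤ B for all m ∈ [1, 16] and g(m) ≤ c · m^(α − 1) + g(√m) for all m > 16. Then there exists a constant C such that g(m) ≤ C for all m ≥ 1. -/
/-- Normalized ID-array construction cost: if `g m ≤ c·m^(α−1) + g(√m)` for `m > 16`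
and `g` is bounded on `[1,16]`, then `g` is bounded on `[1,∞)`. -/
theorem id_array_cost_bounded (α c B : ℝ) (hα : α < 1) (hc : 0 ≤ c) (hB : 0 ≤ B)
    (g : ℝ → ℝ) (hg_nonneg : ∀ m, 0 ≤ g m)
    (h_init : ∀ m ∈ Set.Icc (1 : ℝ) 16, g m ≤ B)
    (h_rec : ∀ m : ℝ, 16 < m → g m ≤ c * m ^ (α - 1) + g (Real.sqrt m)) :
    ∃ C : ℝ, ∀ m : ℝ, 1 ≤ m → g m ≤ C := by
  set r : ℝ := (16 : ℝ) ^ (α - 1) with hr_def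
  have hr_pos : 0 < r := Real.rpow_pos_of_pos (by norm_num) _
  have hr_lt_one : r < 1 :=
    Real.rpow_lt_one_of_one_lt_of_neg (by norm_num) (by linarith)
  -- key inductive claim
  have key : ∀ n : ℕ, ∀ m : ℝ, 1 ≤ m → m ≤ (16 : ℝ) ^ (2 ^ n) →
      g m ≤ B + c * ∑ k ∈ Finset.range n, r ^ (2 ^ k) := by
    intro n
    induction n with
    | zero =>
      intro m hm1 hm2
      simp only [Finset.range_zero, Finset.sum_empty, mul_zero, add_zero]
      exact h_init m ⟨hm1, by simpa using hm2⟩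
    | succ n ih =>
      intro m hm1 hm2
      by_cases hcase : m ≤ (16 : ℝ) ^ (2 ^ n)
      · refine (ih m hm1 hcase).trans ?_
        have : (∑ k ∈ Finset.range n, r ^ (2 ^ k)) ≤
            ∑ k ∈ Finset.range (n + 1), r ^ (2 ^ k) := by
          apply Finset.sum_le_sum_of_subset_of_nonneg
          · exact Finset.range_subset_range.mpr (Nat.le_succ n)
          · intro i _ _; positivity
        nlinarith [this]
      · push_neg at hcase
        have h16 : (16 : ℝ) ≤ (16 : ℝ) ^ (2 ^ n) := by
          calc (16 : ℝ) = 16 ^ 1 := (pow_one _).symm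
          _ ≤ 16 ^ (2 ^ n) := pow_le_pow_right₀ (by norm_num) (Nat.one_le_two_pow)
        have hm16 : 16 < m := lt_of_le_of_lt h16 hcase
        have hmpos : (0 : ℝ) < m := by linarith
        -- bound on m ^ (α - 1)
        have hb1 : m ^ (α - 1) ≤ r ^ (2 ^ n) := by
          have h1 : m ^ (α - 1) ≤ ((16 : ℝ) ^ (2 ^ n)) ^ (α - 1) := by
            apply Real.rpow_le_rpow_of_nonpos (by positivity) hcase.le (by linarith)
          refine h1.trans_eq ?_
          rw [← Real.rpow_natCast (16 : ℝ) (2 ^ n), ← Real.rpow_natCast r (2 ^ n),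
            ← Real.rpow_mul (by norm_num), hr_def, ← Real.rpow_mul (by norm_num)]
          ring_nf
        -- bound on sqrt m
        have hsq_le : Real.sqrt m ≤ (16 : ℝ) ^ (2 ^ n) := by
          have : m ≤ ((16 : ℝ) ^ (2 ^ n)) ^ 2 := by
            rw [← pow_mul]
            calc m ≤ (16 : ℝ) ^ (2 ^ (n + 1)) := hm2
            _ = (16 : ℝ) ^ (2 ^ n * 2) := by ring_nf
          calc Real.sqrt m ≤ Real.sqrt (((16 : ℝ) ^ (2 ^ n)) ^ 2) :=
                Real.sqrt_le_sqrt this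
          _ = (16 : ℝ) ^ (2 ^ n) := Real.sqrt_sq (by positivity)
        have hsq_one : 1 ≤ Real.sqrt m := by
          rw [show (1 : ℝ) = Real.sqrt 1 by simp]
          exact Real.sqrt_le_sqrt (by linarith)
        have hih := ih (Real.sqrt m) hsq_one hsq_le
        have hrec := h_rec m hm16
        rw [Finset.sum_range_succ]
        have : c * m ^ (α - 1) ≤ c * r ^ (2 ^ n) := by
          exact mul_le_mul_of_nonneg_left hb1 hc
        nlinarith [this, hih, hrec]
  refine ⟨B + c * (r * (1 - r)⁻¹), fun m hm1 => ?_⟩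
  obtain ⟨n, hn⟩ := pow_unbounded_of_one_lt m (show (1:ℝ) < 16 by norm_num)
  have hn' : m ≤ (16 : ℝ) ^ (2 ^ n) := by
    refine hn.le.trans (pow_le_pow_right₀ (by norm_num) ?_)
    exact (Nat.lt_two_pow_self (n := n)).le
  refine (key n m hm1 hn').trans ?_
  have hsum : (∑ k ∈ Finset.range n, r ^ (2 ^ k)) ≤ r * (1 - r)⁻¹ := by
    have h1 : (∑ k ∈ Finset.range n, r ^ (2 ^ k)) ≤
        ∑ k ∈ Finset.range n, r ^ (k + 1) := by
      apply Finset.sum_le_sum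
      intro k _
      exact pow_le_pow_of_le_one hr_pos.le hr_lt_one.le (Nat.succ_le_of_lt (Nat.lt_two_pow_self (n := k)))
    refine h1.trans ?_
    have h2 : ∀ k, r ^ (k + 1) = r * r ^ k := fun k => by ring
    simp_rw [h2, ← Finset.mul_sum]
    apply mul_le_mul_of_nonneg_left _ hr_pos.le
    have h3 : (∑ k ∈ Finset.range n, r ^ k) ≤ ∑' k : ℕ, r ^ k := by
      apply Summable.sum_le_tsum
      · intro i _; positivity
      · exact summable_geometric_of_lt_one hr_pos.le hr_lt_one
    rwa [tsum_geometric_of_lt_one hr_pos.le hr_lt_one] at h3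
  nlinarith [hsum]
end
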